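/- The q-symmetrization over the variables v_1,…,v_k of U(u_1,…,u_k; v_1,…,v_k), namely Sym_{v̄}(U(ū;v̄)) = Σ_{σ∈S_k} ∏_{ℓ<ℓ′, σ(ℓ)>σ(ℓ′)} (q·v_{σ(ℓ′)} − q⁻¹·v_{σ(ℓ)})/(q⁻¹·v_{σ(ℓ′)} − q·v_{σ(ℓ)}) · U(u_1,…,u_k; v_{σ(1)},…,v_{σ(k)}), is a symmetric function of u_1,…,u_k: it is invariant under the substitution u_i ↦ u_{ρ(i)} for every ρ ∈ S_k. -/

import Mathlib

open scoped BigOperators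
open MvPolynomial

noncomputable section

/-- The base field `ℂ(q)`. -/
abbrev F0 : Type := RatFunc ℂ

/-- The field `K` of rational functions over `ℂ(q)` in the variables
`u₁,…,u_k` (left summand) and `v₁,…,v_k` (right summand). -/
abbrev KU (k : ℕ) : Type := FractionRing (MvPolynomial (Fin k ⊕ Fin k) F0)

variable (k : ℕ)

/-- The element `q` of `K`. -/
def qU : KU k := algebraMap (MvPolynomial (Fin k ⊕ Fin k) F0) _ (C RatFunc.X)

/-- The variable `u_i`. -/
def uV (i : Fin k) : KU k := algebraMap (MvPolynomial (Fin k ⊕ Fin k) F0) _ (X (Sum.inl i))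

/-- The variable `v_i`. -/
def vV (i : Fin k) : KU k := algebraMap (MvPolynomial (Fin k ⊕ Fin k) F0) _ (X (Sum.inr i))

/-- Substitution `u_i ↦ u_{ρ(i)}`, `v_i ↦ v_{τ(i)}` as a field automorphism of `K`. -/
def actUV (ρ τ : Equiv.Perm (Fin k)) : KU k ≃+* KU k :=
  IsFractionRing.ringEquivOfRingEquiv
    (MvPolynomial.renameEquiv F0 (Equiv.sumCongr ρ τ)).toRingEquiv

/-- `U(u₁,…,u_k; v₁,…,v_k)`. -/
def Uel : KU k :=
  (∏ i : Fin k, (vV k i / uV k i) / (1 - vV k i / uV k i)) *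
    ∏ p ∈ Finset.univ.filter (fun p : Fin k × Fin k => p.1 < p.2),
      ((qU k)⁻¹ - qU k * vV k p.1 / uV k p.2) / (1 - vV k p.1 / uV k p.2)

/-- The q-symmetrization over the variables `v₁,…,v_k`. -/
def symV (G : KU k) : KU k :=
  ∑ σ : Equiv.Perm (Fin k),
    (∏ p ∈ Finset.univ.filter
        (fun p : Fin k × Fin k => p.1 < p.2 ∧ σ p.2 < σ p.1),
      (qU k * vV k (σ p.2) - (qU k)⁻¹ * vV k (σ p.1)) /
        ((qU k)⁻¹ * vV k (σ p.2) - qU k * vV k (σ p.1))) *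
      actUV k (Equiv.refl (Fin k)) σ G

/-! ### Auxiliary material for the proof -/

set_option maxHeartbeats 1000000
set_option synthInstance.maxHeartbeats 200000

lemma actUV_algebraMap (ρ τ : Equiv.Perm (Fin k)) (p : MvPolynomial (Fin k ⊕ Fin k) F0) :
    actUV k ρ τ (algebraMap _ (KU k) p)
      = algebraMap _ (KU k) (rename (Equiv.sumCongr ρ τ) p) := by
  simp [actUV]

lemma act_u (ρ τ : Equiv.Perm (Fin k)) (i : Fin k) : actUV k ρ τ (uV k i) = uV k (ρ i) := by
  simp [uV, actUV_algebraMap]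

lemma act_v (ρ τ : Equiv.Perm (Fin k)) (i : Fin k) : actUV k ρ τ (vV k i) = vV k (τ i) := by
  simp [vV, actUV_algebraMap]

lemma act_q (ρ τ : Equiv.Perm (Fin k)) : actUV k ρ τ (qU k) = qU k := by
  simp [qU, actUV_algebraMap]

lemma act_act (ρ₁ τ₁ ρ₂ τ₂ : Equiv.Perm (Fin k)) (x : KU k) :
    actUV k ρ₁ τ₁ (actUV k ρ₂ τ₂ x) = actUV k (ρ₁ * ρ₂) (τ₁ * τ₂) x := by
  have h : ((actUV k ρ₁ τ₁ : KU k ≃+* KU k) : KU k →+* KU k).comp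
      ((actUV k ρ₂ τ₂ : KU k ≃+* KU k) : KU k →+* KU k)
      = ((actUV k (ρ₁ * ρ₂) (τ₁ * τ₂) : KU k ≃+* KU k) : KU k →+* KU k) := by
    apply IsLocalization.ringHom_ext (nonZeroDivisors (MvPolynomial (Fin k ⊕ Fin k) F0))
    refine RingHom.ext fun p => ?_
    have hfun : (⇑(Equiv.sumCongr ρ₁ τ₁) ∘ ⇑(Equiv.sumCongr ρ₂ τ₂))
        = ⇑(Equiv.sumCongr (ρ₁ * ρ₂) (τ₁ * τ₂)) := by
      funext x; cases x <;> simp [Equiv.Perm.mul_apply]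
    simp only [RingHom.comp_apply, RingHom.coe_comp, Function.comp_apply, RingEquiv.coe_toRingHom,
      actUV_algebraMap, rename_rename, hfun]
  exact RingHom.congr_fun h x

lemma act_one (x : KU k) : actUV k 1 1 x = x := by
  have h : ((actUV k 1 1 : KU k ≃+* KU k) : KU k →+* KU k) = RingHom.id _ := by
    apply IsLocalization.ringHom_ext (nonZeroDivisors (MvPolynomial (Fin k ⊕ Fin k) F0))
    refine RingHom.ext fun p => ?_
    have h1 : (Equiv.sumCongr (1 : Equiv.Perm (Fin k)) (1 : Equiv.Perm (Fin k))) = Equiv.refl _ := by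
      ext x; cases x <;> rfl
    simp only [RingHom.comp_apply, RingHom.coe_comp, Function.comp_apply, RingEquiv.coe_toRingHom,
      actUV_algebraMap, RingHom.id_apply, h1, Equiv.coe_refl, rename_id, AlgHom.id_apply]
  exact RingHom.congr_fun h x

lemma poly_ne_of_aeval {p : MvPolynomial (Fin k ⊕ Fin k) F0} (w : Fin k ⊕ Fin k → F0)
    (h : aeval w p ≠ 0) : algebraMap (MvPolynomial (Fin k ⊕ Fin k) F0) (KU k) p ≠ 0 := by
  intro hp
  apply h
  have hp0 : p = 0 := by
    have := (map_eq_zero_iff (algebraMap (MvPolynomial (Fin k ⊕ Fin k) F0) (KU k))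
      (IsFractionRing.injective (MvPolynomial (Fin k ⊕ Fin k) F0) (KU k))).mp hp
    exact this
  simp [hp0]

lemma qU_ne : qU k ≠ 0 := by
  apply poly_ne_of_aeval k (fun _ => 0)
  simp [RatFunc.X_ne_zero]

lemma uV_ne (i : Fin k) : uV k i ≠ 0 := by
  apply poly_ne_of_aeval k (fun s => if s = Sum.inl i then 1 else 0)
  simp

lemma uvV_ne (j i : Fin k) : uV k j - vV k i ≠ 0 := by
  rw [uV, vV, ← RingHom.map_sub]
  apply poly_ne_of_aeval k (fun s => if s = Sum.inl j then 1 else 0)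
  simp

lemma inv_qU : (qU k)⁻¹
    = algebraMap (MvPolynomial (Fin k ⊕ Fin k) F0) (KU k) (C (RatFunc.X)⁻¹) := by
  apply inv_eq_of_mul_eq_one_right
  rw [qU, ← RingHom.map_mul, ← C_mul, mul_inv_cancel₀ RatFunc.X_ne_zero]
  simp

lemma qvv_ne (i j : Fin k) (h : i ≠ j) : (qU k)⁻¹ * vV k i - qU k * vV k j ≠ 0 := by
  rw [inv_qU, qU, vV, vV, ← RingHom.map_mul, ← RingHom.map_mul, ← RingHom.map_sub]
  apply poly_ne_of_aeval k (fun s => if s = Sum.inr i then 1 else 0)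
  have : (Sum.inr j : Fin k ⊕ Fin k) ≠ Sum.inr i := by simpa [eq_comm] using h
  simp [this, RatFunc.X_ne_zero]

set_option maxHeartbeats 4000000 in
lemma local_id {K : Type*} [Field K] (q x y Z T : K)
    (hq : q ≠ 0) (hx : x ≠ 0) (hy : y ≠ 0)
    (hxZ : x - Z ≠ 0) (hxT : x - T ≠ 0) (hyZ : y - Z ≠ 0) (hyT : y - T ≠ 0)
    (hZT : q⁻¹ * Z - q * T ≠ 0) :
    Z / y / (1 - Z / y) * (T / x / (1 - T / x)) * ((q⁻¹ - q * Z / x) / (1 - Z / x))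
      + (q * Z - q⁻¹ * T) / (q⁻¹ * Z - q * T) *
        (T / y / (1 - T / y) * (Z / x / (1 - Z / x)) * ((q⁻¹ - q * T / x) / (1 - T / x)))
    = Z / x / (1 - Z / x) * (T / y / (1 - T / y)) * ((q⁻¹ - q * Z / y) / (1 - Z / y))
      + (q * Z - q⁻¹ * T) / (q⁻¹ * Z - q * T) *
        (T / x / (1 - T / x) * (Z / y / (1 - Z / y)) * ((q⁻¹ - q * T / y) / (1 - T / y))) := by
  have hZT' : Z - q ^ 2 * T ≠ 0 := by
    intro h0
    apply hZT
    have : q⁻¹ * Z - q * T = q⁻¹ * (Z - q ^ 2 * T) := by field_simp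
    rw [this, h0, mul_zero]
  have dZy : Z / y / (1 - Z / y) = Z / (y - Z) := by
    rw [div_div, show y * (1 - Z / y) = y - Z by field_simp]
  have dTy : T / y / (1 - T / y) = T / (y - T) := by
    rw [div_div, show y * (1 - T / y) = y - T by field_simp]
  have dZx : Z / x / (1 - Z / x) = Z / (x - Z) := by
    rw [div_div, show x * (1 - Z / x) = x - Z by field_simp]
  have dTx : T / x / (1 - T / x) = T / (x - T) := by
    rw [div_div, show x * (1 - T / x) = x - T by field_simp]
  have key : ∀ W u : K, u ≠ 0 → u - W ≠ 0 →
      (q⁻¹ - q * W / u) / (1 - W / u) = (u - q ^ 2 * W) / (q * (u - W)) := by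
    intro W u hu huW
    rw [div_eq_div_iff]
    · field_simp
    · intro h0
      apply huW
      have : u - W = u * (1 - W / u) := by field_simp
      rw [this, h0, mul_zero]
    · exact mul_ne_zero hq huW
  have cZT : (q * Z - q⁻¹ * T) / (q⁻¹ * Z - q * T) = (q ^ 2 * Z - T) / (Z - q ^ 2 * T) := by
    rw [div_eq_div_iff hZT hZT']
    field_simp
  rw [dZy, dTy, dZx, dTx, key Z x hx hxZ, key T x hx hxT, key Z y hy hyZ, key T y hy hyT, cZT]
  simp only [div_mul_div_comm]
  rw [div_add_div _ _ (by apply_rules [mul_ne_zero]) (by apply_rules [mul_ne_zero]),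
    div_add_div _ _ (by apply_rules [mul_ne_zero]) (by apply_rules [mul_ne_zero]),
    div_eq_div_iff (by apply_rules [mul_ne_zero]) (by apply_rules [mul_ne_zero])]
  ring

/-- The q-deformation coefficient factor. -/
def Ff (i j : Fin k) : KU k :=
  (qU k * vV k j - (qU k)⁻¹ * vV k i) / ((qU k)⁻¹ * vV k j - qU k * vV k i)

/-- The coefficient in the q-symmetrization. -/
def ccf (σ : Equiv.Perm (Fin k)) : KU k :=
  ∏ p ∈ Finset.univ.filter (fun p : Fin k × Fin k => p.1 < p.2 ∧ σ p.2 < σ p.1),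
    Ff k (σ p.1) (σ p.2)

def ddf (j i : Fin k) : KU k := vV k i / uV k j / (1 - vV k i / uV k j)

def ggf (i j : Fin k) : KU k :=
  ((qU k)⁻¹ - qU k * vV k i / uV k j) / (1 - vV k i / uV k j)

def pairsk : Finset (Fin k × Fin k) := Finset.univ.filter (fun p => p.1 < p.2)

lemma symV_eq (G : KU k) : symV k G = ∑ σ : Equiv.Perm (Fin k), ccf k σ * actUV k 1 σ G := rfl

lemma UU_eq (ρ τ : Equiv.Perm (Fin k)) :
    actUV k ρ τ (Uel k)
      = (∏ i, ddf k (ρ i) (τ i)) * ∏ p ∈ pairsk k, ggf k (τ p.1) (ρ p.2) := by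
  simp only [Uel, pairsk, ddf, ggf, map_mul, map_prod, map_div₀, map_sub, map_one, map_inv₀,
    act_u, act_v, act_q]

lemma swap_lt {a b : Fin k} (hab : a < b) (hcov : ∀ x, a < x → b ≤ x) {p1 p2 : Fin k}
    (h12 : p1 < p2) (hne : ¬(p1 = a ∧ p2 = b)) :
    Equiv.swap a b p1 < Equiv.swap a b p2 := by
  by_cases h1a : p1 = a
  · have ha2 : a < p2 := h1a ▸ h12
    have h2b : p2 ≠ b := fun h => hne ⟨h1a, h⟩
    have h2a : p2 ≠ a := ne_of_gt ha2
    rw [h1a, Equiv.swap_apply_left, Equiv.swap_apply_of_ne_of_ne h2a h2b]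
    exact lt_of_le_of_ne (hcov p2 ha2) (Ne.symm h2b)
  · by_cases h1b : p1 = b
    · have hb2 : b < p2 := h1b ▸ h12
      have h2a : p2 ≠ a := ne_of_gt (lt_trans hab hb2)
      have h2b : p2 ≠ b := ne_of_gt hb2
      rw [h1b, Equiv.swap_apply_right, Equiv.swap_apply_of_ne_of_ne h2a h2b]
      exact lt_trans hab hb2
    · rw [Equiv.swap_apply_of_ne_of_ne h1a h1b]
      by_cases h2a : p2 = a
      · rw [h2a, Equiv.swap_apply_left]
        exact lt_trans (h2a ▸ h12) hab
      · by_cases h2b : p2 = b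
        · rw [h2b, Equiv.swap_apply_right]
          have h12b : p1 < b := h2b ▸ h12
          rcases lt_or_ge a p1 with h | h
          · exact absurd (hcov p1 h) (not_le.mpr h12b)
          · exact lt_of_le_of_ne h h1a
        · rw [Equiv.swap_apply_of_ne_of_ne h2a h2b]
          exact h12

lemma ccf_mul_swap (a b : Fin k) (hab : a < b) (hcov : ∀ x, a < x → b ≤ x)
    (σ : Equiv.Perm (Fin k)) (hσ : σ a < σ b) :
    ccf k (σ * Equiv.swap a b) = Ff k (σ b) (σ a) * ccf k σ := by
  set s := Equiv.swap a b with hs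
  have hsa : s a = b := Equiv.swap_apply_left a b
  have hsb : s b = a := Equiv.swap_apply_right a b
  have hss : ∀ x, s (s x) = x := fun x => Equiv.swap_apply_self a b x
  have hmem : (a, b) ∈ Finset.univ.filter
      (fun p : Fin k × Fin k => p.1 < p.2 ∧ (σ * s) p.2 < (σ * s) p.1) := by
    simp only [Finset.mem_filter, Finset.mem_univ, true_and]
    refine ⟨hab, ?_⟩
    simp only [Equiv.Perm.mul_apply, hsa, hsb]
    exact hσ
  unfold ccf
  rw [← Finset.mul_prod_erase _ _ hmem]
  have hval : Ff k ((σ * s) (a, b).1) ((σ * s) (a, b).2) = Ff k (σ b) (σ a) := by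
    simp only [Equiv.Perm.mul_apply, hsa, hsb]
  rw [hval]
  congr 1
  apply Finset.prod_nbij' (i := fun p : Fin k × Fin k => (s p.1, s p.2))
    (j := fun p : Fin k × Fin k => (s p.1, s p.2))
  · intro p hp
    rw [Finset.mem_erase, Finset.mem_filter] at hp
    obtain ⟨hpne, -, h12, hinv⟩ := hp
    have hne : ¬(p.1 = a ∧ p.2 = b) := by
      rintro ⟨h1, h2⟩
      exact hpne (by rw [← h1, ← h2])
    rw [Finset.mem_filter]
    refine ⟨Finset.mem_univ _, swap_lt k hab hcov h12 hne, ?_⟩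
    simpa [Equiv.Perm.mul_apply] using hinv
  · intro p hp
    rw [Finset.mem_filter] at hp
    obtain ⟨-, h12, hinv⟩ := hp
    have hne : ¬(p.1 = a ∧ p.2 = b) := by
      rintro ⟨h1, h2⟩
      rw [h1, h2] at hinv
      exact absurd hσ (not_lt.mpr (le_of_lt hinv))
    rw [Finset.mem_erase, Finset.mem_filter]
    refine ⟨?_, Finset.mem_univ _, swap_lt k hab hcov h12 hne, ?_⟩
    · intro h0
      have h1 : s p.1 = a := congrArg Prod.fst h0
      have h2 : s p.2 = b := congrArg Prod.snd h0
      have e1 : p.1 = b := by rw [← hss p.1, h1, hsa]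
      have e2 : p.2 = a := by rw [← hss p.2, h2, hsb]
      rw [e1, e2] at h12
      exact absurd hab (not_lt.mpr (le_of_lt h12))
    · simp only [Equiv.Perm.mul_apply, hss]
      exact hinv
  · intro p _
    simp [hss]
  · intro p _
    simp [hss]
  · intro p _
    simp [Equiv.Perm.mul_apply]

lemma erase_pairs_mem (a b : Fin k) (hab : a < b) (hcov : ∀ x, a < x → b ≤ x)
    {p : Fin k × Fin k} (hp : p ∈ (pairsk k).erase (a, b)) :
    (Equiv.swap a b p.1, Equiv.swap a b p.2) ∈ (pairsk k).erase (a, b) := by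
  rw [Finset.mem_erase] at hp ⊢
  simp only [pairsk, Finset.mem_filter, Finset.mem_univ, true_and] at hp ⊢
  obtain ⟨hpne, h12⟩ := hp
  have hne : ¬(p.1 = a ∧ p.2 = b) := by
    rintro ⟨h1, h2⟩
    exact hpne (by rw [← h1, ← h2])
  refine ⟨?_, swap_lt k hab hcov h12 hne⟩
  intro h0
  have h1 : Equiv.swap a b p.1 = a := congrArg Prod.fst h0
  have h2 : Equiv.swap a b p.2 = b := congrArg Prod.snd h0
  have e1 : p.1 = b := by
    rw [← Equiv.swap_apply_self a b p.1, h1, Equiv.swap_apply_left]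
  have e2 : p.2 = a := by
    rw [← Equiv.swap_apply_self a b p.2, h2, Equiv.swap_apply_right]
  rw [e1, e2] at h12
  exact absurd hab (not_lt.mpr (le_of_lt h12))

lemma erase_pairs_mem2 (a b : Fin k) (hab : a < b) (hcov : ∀ x, a < x → b ≤ x)
    {p : Fin k × Fin k} (hp : p ∈ (pairsk k).erase (a, b)) :
    (p.1, Equiv.swap a b p.2) ∈ (pairsk k).erase (a, b) := by
  rw [Finset.mem_erase] at hp ⊢
  simp only [pairsk, Finset.mem_filter, Finset.mem_univ, true_and] at hp ⊢
  obtain ⟨hpne, h12⟩ := hp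
  by_cases h2a : p.2 = a
  · have h1a : p.1 < a := h2a ▸ h12
    refine ⟨?_, ?_⟩
    · intro h0
      exact (ne_of_lt h1a) (congrArg Prod.fst h0)
    · rw [h2a, Equiv.swap_apply_left]
      exact lt_trans h1a hab
  · by_cases h2b : p.2 = b
    · have h12b : p.1 < b := h2b ▸ h12
      have h1a : p.1 ≠ a := by
        intro h1
        apply hpne
        rw [← h1, ← h2b]
      have h1lta : p.1 < a := by
        rcases lt_or_ge a p.1 with h | h
        · exact absurd (hcov p.1 h) (not_le.mpr h12b)
        · exact lt_of_le_of_ne h h1a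
      refine ⟨fun h0 => h1a (congrArg Prod.fst h0), ?_⟩
      rw [h2b, Equiv.swap_apply_right]
      exact h1lta
    · rw [Equiv.swap_apply_of_ne_of_ne h2a h2b]
      exact ⟨hpne, h12⟩

lemma core (a b : Fin k) (hab : a < b) (hcov : ∀ x, a < x → b ≤ x)
    (σ : Equiv.Perm (Fin k)) (hσ : σ a < σ b) :
    ccf k σ * actUV k (Equiv.swap a b) σ (Uel k)
      + ccf k (σ * Equiv.swap a b) * actUV k (Equiv.swap a b) (σ * Equiv.swap a b) (Uel k)
    = ccf k σ * actUV k 1 σ (Uel k)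
      + ccf k (σ * Equiv.swap a b) * actUV k 1 (σ * Equiv.swap a b) (Uel k) := by
  have hab' : a ≠ b := ne_of_lt hab
  have hσne : σ a ≠ σ b := fun h => hab' (σ.injective h)
  set s := Equiv.swap a b with hs
  have hsa : s a = b := Equiv.swap_apply_left a b
  have hsb : s b = a := Equiv.swap_apply_right a b
  have hss : ∀ x, s (s x) = x := fun x => Equiv.swap_apply_self a b x
  have hsid : ∀ i, i ≠ a → i ≠ b → s i = i :=
    fun i h1 h2 => Equiv.swap_apply_of_ne_of_ne h1 h2
  have hmem : (a, b) ∈ pairsk k := by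
    simp only [pairsk, Finset.mem_filter, Finset.mem_univ, true_and]
    exact hab
  have hbmem : b ∈ (Finset.univ : Finset (Fin k)).erase a := by
    simp [Ne.symm hab']
  -- diagonal splitting
  have diag : ∀ ρ τ : Equiv.Perm (Fin k), (∀ i, i ≠ a → i ≠ b → ρ i = i) →
      (∀ i, i ≠ a → i ≠ b → τ i = σ i) →
      (∏ i, ddf k (ρ i) (τ i))
        = ddf k (ρ a) (τ a) * (ddf k (ρ b) (τ b)
            * ∏ i ∈ (Finset.univ.erase a).erase b, ddf k i (σ i)) := by
    intro ρ τ hρ hτ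
    rw [← Finset.mul_prod_erase Finset.univ _ (Finset.mem_univ a),
        ← Finset.mul_prod_erase _ _ hbmem]
    congr 2
    apply Finset.prod_congr rfl
    intro i hi
    have hib : i ≠ b := (Finset.mem_erase.mp hi).1
    have hia : i ≠ a := (Finset.mem_erase.mp (Finset.mem_erase.mp hi).2).1
    rw [hρ i hia hib, hτ i hia hib]
  -- off-diagonal: pull out the (a,b) factor
  have offd : ∀ f : Fin k × Fin k → KU k,
      ∏ p ∈ pairsk k, f p = f (a, b) * ∏ p ∈ (pairsk k).erase (a, b), f p :=
    fun f => (Finset.mul_prod_erase _ _ hmem).symm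
  -- reindexing identities on the erased pair set
  have hGr1 : ∏ p ∈ (pairsk k).erase (a, b), ggf k (σ p.1) (s p.2)
      = ∏ p ∈ (pairsk k).erase (a, b), ggf k (σ p.1) p.2 := by
    apply Finset.prod_nbij' (i := fun p : Fin k × Fin k => (p.1, s p.2))
      (j := fun p : Fin k × Fin k => (p.1, s p.2))
    · exact fun p hp => erase_pairs_mem2 k a b hab hcov hp
    · exact fun p hp => erase_pairs_mem2 k a b hab hcov hp
    · intro p _; simp [hss]
    · intro p _; simp [hss]
    · intro p _; rfl
  have hGr2 : ∏ p ∈ (pairsk k).erase (a, b), ggf k ((σ * s) p.1) p.2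
      = ∏ p ∈ (pairsk k).erase (a, b), ggf k (σ p.1) (s p.2) := by
    apply Finset.prod_nbij' (i := fun p : Fin k × Fin k => (s p.1, s p.2))
      (j := fun p : Fin k × Fin k => (s p.1, s p.2))
    · exact fun p hp => erase_pairs_mem k a b hab hcov hp
    · exact fun p hp => erase_pairs_mem k a b hab hcov hp
    · intro p _; simp [hss]
    · intro p _; simp [hss]
    · intro p _
      simp only [Equiv.Perm.mul_apply, hss]
  have hGr3 : ∏ p ∈ (pairsk k).erase (a, b), ggf k ((σ * s) p.1) (s p.2)
      = ∏ p ∈ (pairsk k).erase (a, b), ggf k (σ p.1) p.2 := by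
    apply Finset.prod_nbij' (i := fun p : Fin k × Fin k => (s p.1, s p.2))
      (j := fun p : Fin k × Fin k => (s p.1, s p.2))
    · exact fun p hp => erase_pairs_mem k a b hab hcov hp
    · exact fun p hp => erase_pairs_mem k a b hab hcov hp
    · intro p _; simp [hss]
    · intro p _; simp [hss]
    · intro p _
      simp only [Equiv.Perm.mul_apply, hss]
  have hτa : (σ * s) a = σ b := by rw [Equiv.Perm.mul_apply, hsa]
  have hτb : (σ * s) b = σ a := by rw [Equiv.Perm.mul_apply, hsb]
  have hτid : ∀ i, i ≠ a → i ≠ b → (σ * s) i = σ i := by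
    intro i h1 h2
    rw [Equiv.Perm.mul_apply, hsid i h1 h2]
  set R : KU k := ∏ i ∈ (Finset.univ.erase a).erase b, ddf k i (σ i) with hR
  set Gr : KU k := ∏ p ∈ (pairsk k).erase (a, b), ggf k (σ p.1) p.2 with hGr
  have E1 : actUV k s σ (Uel k)
      = ddf k b (σ a) * (ddf k a (σ b) * R) * (ggf k (σ a) a * Gr) := by
    rw [UU_eq, diag s σ hsid (fun _ _ _ => rfl),
      offd (fun p => ggf k (σ p.1) (s p.2))]
    simp only [hsa, hsb]
    rw [hGr1]
  have E2 : actUV k s (σ * s) (Uel k)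
      = ddf k b (σ b) * (ddf k a (σ a) * R) * (ggf k (σ b) a * Gr) := by
    rw [UU_eq, diag s (σ * s) hsid hτid,
      offd (fun p => ggf k ((σ * s) p.1) (s p.2))]
    simp only [hsa, hsb, hτa, hτb]
    rw [hGr3]
  have E3 : actUV k 1 σ (Uel k)
      = ddf k a (σ a) * (ddf k b (σ b) * R) * (ggf k (σ a) b * Gr) := by
    rw [UU_eq, diag 1 σ (fun _ _ _ => rfl) (fun _ _ _ => rfl),
      offd (fun p => ggf k (σ p.1) ((1 : Equiv.Perm (Fin k)) p.2))]
    simp only [Equiv.Perm.one_apply]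
    rw [← hGr]
  have E4 : actUV k 1 (σ * s) (Uel k)
      = ddf k a (σ b) * (ddf k b (σ a) * R) * (ggf k (σ b) b * Gr) := by
    rw [UU_eq, diag 1 (σ * s) (fun _ _ _ => rfl) hτid,
      offd (fun p => ggf k ((σ * s) p.1) ((1 : Equiv.Perm (Fin k)) p.2))]
    simp only [Equiv.Perm.one_apply, hτa, hτb]
    rw [hGr2, hGr1]
  rw [E1, E2, E3, E4, ccf_mul_swap k a b hab hcov σ hσ]
  have LI := local_id (qU k) (uV k a) (uV k b) (vV k (σ a)) (vV k (σ b))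
    (qU_ne k) (uV_ne k a) (uV_ne k b)
    (uvV_ne k a (σ a)) (uvV_ne k a (σ b)) (uvV_ne k b (σ a)) (uvV_ne k b (σ b))
    (qvv_ne k (σ a) (σ b) hσne)
  simp only [ddf, ggf, Ff]
  linear_combination (ccf k σ * R * Gr) * LI

lemma pair_sum (a b : Fin k) (hab : a ≠ b) (f g : Equiv.Perm (Fin k) → KU k)
    (h : ∀ σ : Equiv.Perm (Fin k), σ a < σ b →
      f σ + f (σ * Equiv.swap a b) = g σ + g (σ * Equiv.swap a b)) :
    ∑ σ : Equiv.Perm (Fin k), f σ = ∑ σ : Equiv.Perm (Fin k), g σ := by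
  have split : ∀ F : Equiv.Perm (Fin k) → KU k,
      ∑ σ : Equiv.Perm (Fin k), F σ
        = ∑ σ ∈ Finset.univ.filter (fun σ : Equiv.Perm (Fin k) => σ a < σ b),
            (F σ + F (σ * Equiv.swap a b)) := by
    intro F
    rw [Finset.sum_add_distrib,
      ← Finset.sum_filter_add_sum_filter_not Finset.univ
        (fun σ : Equiv.Perm (Fin k) => σ a < σ b) F]
    congr 1
    apply Finset.sum_nbij' (i := fun σ => σ * Equiv.swap a b) (j := fun σ => σ * Equiv.swap a b)
    · intro σ hσ
      rw [Finset.mem_filter] at hσ ⊢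
      refine ⟨Finset.mem_univ _, ?_⟩
      have hne : σ b ≠ σ a := fun h0 => hab (σ.injective h0).symm
      have : σ b < σ a := lt_of_le_of_ne (le_of_not_gt hσ.2) hne
      simpa [Equiv.Perm.mul_apply] using this
    · intro σ hσ
      rw [Finset.mem_filter] at hσ ⊢
      refine ⟨Finset.mem_univ _, ?_⟩
      simpa [Equiv.Perm.mul_apply] using not_lt.mpr (le_of_lt hσ.2)
    · intro σ _
      rw [mul_assoc, Equiv.swap_mul_self, mul_one]
    · intro σ _
      rw [mul_assoc, Equiv.swap_mul_self, mul_one]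
    · intro σ _
      rw [mul_assoc, Equiv.swap_mul_self, mul_one]
  rw [split f, split g]
  apply Finset.sum_congr rfl
  intro σ hσ
  rw [Finset.mem_filter] at hσ
  exact h σ hσ.2

lemma adj (a b : Fin k) (hab : a < b) (hcov : ∀ x, a < x → b ≤ x) :
    actUV k (Equiv.swap a b) 1 (symV k (Uel k)) = symV k (Uel k) := by
  rw [symV_eq, map_sum]
  have step : ∀ σ : Equiv.Perm (Fin k),
      actUV k (Equiv.swap a b) 1 (ccf k σ * actUV k 1 σ (Uel k))
        = ccf k σ * actUV k (Equiv.swap a b) σ (Uel k) := by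
    intro σ
    rw [map_mul, act_act, mul_one, one_mul]
    congr 1
    simp only [ccf, Ff, map_prod, map_div₀, map_sub, map_mul, map_inv₀, act_q, act_v,
      Equiv.Perm.one_apply]
  simp only [step]
  apply pair_sum k a b (ne_of_lt hab)
  intro σ hσ
  exact core k a b hab hcov σ hσ

theorem statement8 (ρ : Equiv.Perm (Fin k)) :
    actUV k ρ (Equiv.refl (Fin k)) (symV k (Uel k)) = symV k (Uel k) := by
  show actUV k ρ 1 (symV k (Uel k)) = symV k (Uel k)
  cases k with
  | zero =>
      have hρ : ρ = 1 := by
        ext i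
        exact absurd i.2 (by omega)
      rw [hρ]
      exact act_one 0 _
  | succ n =>
      have hmem : ρ ∈ Submonoid.closure
          (Set.range fun i : Fin n => Equiv.swap i.castSucc i.succ) := by
        rw [Equiv.Perm.mclosure_swap_castSucc_succ]
        trivial
      induction hmem using Submonoid.closure_induction with
      | mem x hx =>
          obtain ⟨i, rfl⟩ := hx
          apply adj (n + 1) i.castSucc i.succ Fin.castSucc_lt_succ
          intro x hx
          rw [Fin.lt_def] at hx
          rw [Fin.le_def]
          simp only [Fin.coe_castSucc, Fin.val_succ] at hx ⊢
          omega
      | one => exact act_one (n + 1) _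
      | mul x y _ _ hx hy =>
          calc actUV (n + 1) (x * y) 1 (symV (n + 1) (Uel (n + 1)))
              = actUV (n + 1) x 1 (actUV (n + 1) y 1 (symV (n + 1) (Uel (n + 1)))) := by
                rw [act_act, mul_one]
            _ = symV (n + 1) (Uel (n + 1)) := by rw [hy, hx]

end
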